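/- arXiv:1210.7837 — 2 statements merged into one kernel-verified Lean document; each statement's English description precedes it below -/
import Mathlib

section
/- Let Q : ℕ → ℝ satisfy Q(t) ≥ 0, Q(t+1) = max(Q(t) - μ(t), 0), with 0 ≤ μ(t) ≤ μmax for all t, over a frame of T slots starting at time kT after an initial arrival: Q(kT+1) = max(Q(kT) - μ(kT), 0) + A with A ≥ 0. Then Q(kT+T)^2 - Q(kT)^2 ≤ A^2 + T^2·μmax^2 + 2·Q(kT)·(A - Σ_{t=0}^{T-1} μ(kT+t)). -/
theorem stmt3 (Q μ : ℕ → ℝ) (μmax A : ℝ) (k T : ℕ) (hT : 1 ≤ T)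
    (hQnn : ∀ t, 0 ≤ Q t)
    (hμ : ∀ t, 0 ≤ μ t ∧ μ t ≤ μmax)
    (hA : 0 ≤ A)
    (harr : Q (k * T + 1) = max (Q (k * T) - μ (k * T)) 0 + A)
    (hrec : ∀ t, 1 ≤ t → t ≤ T - 1 →
      Q (k * T + t + 1) = max (Q (k * T + t) - μ (k * T + t)) 0) :
    Q (k * T + T) ^ 2 - Q (k * T) ^ 2 ≤
      A ^ 2 + (T : ℝ) ^ 2 * μmax ^ 2 +
        2 * Q (k * T) * (A - ∑ t ∈ Finset.range T, μ (k * T + t)) := by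
  have hμmax : 0 ≤ μmax := le_trans (hμ 0).1 (hμ 0).2
  have key : ∀ t, 1 ≤ t → t ≤ T →
      Q (k * T + t) ≤ max (Q (k * T) - ∑ s ∈ Finset.range t, μ (k * T + s)) 0 + A := by
    intro t
    induction t with
    | zero => intro h; omega
    | succ n ih =>
      intro _ hle
      rcases Nat.eq_zero_or_pos n with h0 | h1
      · subst h0
        rw [Finset.sum_range_one, show k * T + 0 = k * T from rfl, harr]
      · have hn : n ≤ T - 1 := by omega
        have hrn := hrec n h1 hn
        have ihn := ih h1 (by omega)
        have hμn := (hμ (k * T + n)).1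
        rw [show k * T + (n + 1) = k * T + n + 1 from rfl, hrn,
          Finset.sum_range_succ]
        rcases max_cases (Q (k * T + n) - μ (k * T + n)) 0 with ⟨he, _⟩ | ⟨he, _⟩ <;>
          rcases max_cases (Q (k * T) - ∑ s ∈ Finset.range n, μ (k * T + s)) 0 with
            ⟨he2, hc2⟩ | ⟨he2, hc2⟩ <;>
          [skip; skip; skip; skip] <;>
          · have ha := le_max_left
              (Q (k * T) - (∑ s ∈ Finset.range n, μ (k * T + s) + μ (k * T + n))) (0:ℝ)
            have hb := le_max_right
              (Q (k * T) - (∑ s ∈ Finset.range n, μ (k * T + s) + μ (k * T + n))) (0:ℝ)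
            linarith
  have hfin := key T hT le_rfl
  set S := ∑ t ∈ Finset.range T, μ (k * T + t) with hS
  have hS1 : 0 ≤ S := Finset.sum_nonneg fun i _ => (hμ (k * T + i)).1
  have hS2 : S ≤ (T : ℝ) * μmax := by
    calc S ≤ ∑ _t ∈ Finset.range T, μmax :=
          Finset.sum_le_sum fun i _ => (hμ (k * T + i)).2
      _ = (T : ℝ) * μmax := by simp [Finset.sum_const, mul_comm]
  have hS3 : S ^ 2 ≤ ((T : ℝ) * μmax) ^ 2 := pow_le_pow_left₀ hS1 hS2 2
  have hTm : ((T : ℝ) * μmax) ^ 2 = (T : ℝ) ^ 2 * μmax ^ 2 := by ring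
  have hQ0 := hQnn (k * T)
  have hQT := hQnn (k * T + T)
  rcases max_cases (Q (k * T) - S) (0:ℝ) with ⟨he, hc⟩ | ⟨he, hc⟩ <;> rw [he] at hfin
  · nlinarith [sq_nonneg (Q (k * T) - S + A - Q (k * T + T)), mul_nonneg hS1 hA,
      mul_nonneg hQ0 hA]
  · nlinarith [sq_nonneg (S - Q (k * T)), mul_nonneg hQ0 hA, sq_nonneg (A - Q (k * T + T))]
end

section
/- Let N, M ∈ ℕ, x_max ≥ 0, Q : Fin N → ℝ≥0, and weights w(i,j) ∈ [0, x_max] for i ∈ Fin N, j ∈ Fin M. Suppose I : Fin M → Fin N satisfies, for virtual queues Q^{(j)} with Qᵢ − M·x_max ≤ Q^{(j)}ᵢ ≤ Qᵢ, the per-round optimality Q^{(j)}(I(j))·w(I(j),j) ≥ Q^{(j)}(i)·w(i,j) for all i. Then for any I' : Fin M → Fin N, Σⱼ Q(I(j))·w(I(j),j) ≥ Σⱼ Q(I'(j))·w(I'(j),j) − M²·x_max². -/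
theorem stmt10 (N M : ℕ) (xmax : ℝ) (hx : 0 ≤ xmax)
    (Q : Fin N → ℝ) (hQ : ∀ i, 0 ≤ Q i)
    (w : Fin N → Fin M → ℝ) (hw : ∀ i j, 0 ≤ w i j ∧ w i j ≤ xmax)
    (Qv : Fin M → Fin N → ℝ)
    (hQv : ∀ j i, Q i - M * xmax ≤ Qv j i ∧ Qv j i ≤ Q i)
    (I : Fin M → Fin N)
    (hI : ∀ j i, Qv j i * w i j ≤ Qv j (I j) * w (I j) j)
    (I' : Fin M → Fin N) :
    ∑ j, Q (I' j) * w (I' j) j - (M : ℝ) ^ 2 * xmax ^ 2 ≤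
      ∑ j, Q (I j) * w (I j) j := by
  have key : ∀ j : Fin M, Q (I' j) * w (I' j) j ≤ Q (I j) * w (I j) j + M * xmax ^ 2 := by
    intro j
    have h1 : (Q (I' j) - Qv j (I' j)) * w (I' j) j ≤ (M * xmax) * xmax := by
      apply mul_le_mul (by linarith [(hQv j (I' j)).1]) (hw (I' j) j).2 (hw (I' j) j).1
      positivity
    have h2 := hI j (I' j)
    have h3 : Qv j (I j) * w (I j) j ≤ Q (I j) * w (I j) j :=
      mul_le_mul_of_nonneg_right (hQv j (I j)).2 (hw (I j) j).1
    nlinarith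
  calc ∑ j, Q (I' j) * w (I' j) j - (M : ℝ) ^ 2 * xmax ^ 2
      ≤ ∑ j, (Q (I j) * w (I j) j + M * xmax ^ 2) - (M : ℝ) ^ 2 * xmax ^ 2 := by
        gcongr; exact key _
    _ = ∑ j, Q (I j) * w (I j) j := by
        rw [Finset.sum_add_distrib, Finset.sum_const, Finset.card_univ, Fintype.card_fin]
        push_cast; ring
end
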